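/- The equation tan(λ) = tanh(λ) has exactly one solution λ in the interval (π, 3π/2), and this solution lies in (3.9, 3.95). -/

import Mathlib

open Set

namespace Stmt9Aux

open Real

lemma tanh_eq_fun : Real.tanh = fun x => Real.sinh x / Real.cosh x :=
  funext fun x => Real.tanh_eq_sinh_div_cosh x

lemma hasDerivAt_tanh (x : ℝ) :
    HasDerivAt Real.tanh (1 / Real.cosh x ^ 2) x := by
  have h := (Real.hasDerivAt_sinh x).div (Real.hasDerivAt_cosh x)
    (ne_of_gt (Real.cosh_pos x))
  rw [tanh_eq_fun]
  have hc := Real.cosh_sq_sub_sinh_sq x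
  have e : (Real.cosh x * Real.cosh x - Real.sinh x * Real.sinh x) / Real.cosh x ^ 2
      = 1 / Real.cosh x ^ 2 := by congr 1; nlinarith [Real.cosh_pos x]
  rw [e] at h
  exact h

lemma continuous_tanh : Continuous Real.tanh := by
  rw [tanh_eq_fun]
  exact Real.continuous_sinh.div Real.continuous_cosh fun x => ne_of_gt (Real.cosh_pos x)

lemma tanh_lt_one (x : ℝ) : Real.tanh x < 1 := by
  rw [Real.tanh_eq_sinh_div_cosh, div_lt_one (Real.cosh_pos x)]
  exact Real.sinh_lt_cosh x

lemma cos_ne_zero_of_mem {x : ℝ} (hx : x ∈ Ioo π (3 * π / 2)) : Real.cos x ≠ 0 := by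
  have h1 : π / 2 < x := lt_trans (by linarith [Real.pi_pos]) hx.1
  have h2 : x < π + π / 2 := by linarith [hx.2]
  exact ne_of_lt (Real.cos_neg_of_pi_div_two_lt_of_lt h1 h2)

lemma continuousOn_f :
    ContinuousOn (fun x => Real.tan x - Real.tanh x) (Ioo π (3 * π / 2)) := by
  intro x hx
  exact ((Real.continuousAt_tan.mpr (cos_ne_zero_of_mem hx)).sub
    continuous_tanh.continuousAt).continuousWithinAt

lemma strictMonoOn_f :
    StrictMonoOn (fun x => Real.tan x - Real.tanh x) (Ioo π (3 * π / 2)) := by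
  apply strictMonoOn_of_deriv_pos (convex_Ioo _ _) continuousOn_f
  intro x hx
  rw [interior_Ioo] at hx
  have hcos : Real.cos x ≠ 0 := cos_ne_zero_of_mem hx
  have hder : HasDerivAt (fun x => Real.tan x - Real.tanh x)
      (1 / Real.cos x ^ 2 - 1 / Real.cosh x ^ 2) x :=
    (Real.hasDerivAt_tan hcos).sub (hasDerivAt_tanh x)
  rw [hder.deriv]
  have hx0 : x ≠ 0 := by
    have := Real.pi_pos
    intro h; rw [h] at hx; linarith [hx.1]
  have hcosh : 1 < Real.cosh x := Real.one_lt_cosh.mpr hx0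
  have hcs : Real.cos x ^ 2 ≤ 1 := Real.cos_sq_le_one x
  have hcs0 : 0 < Real.cos x ^ 2 := by positivity
  have h1 : 1 / Real.cosh x ^ 2 < 1 := by
    rw [div_lt_one (by positivity)]
    nlinarith
  have h2 : 1 ≤ 1 / Real.cos x ^ 2 := by
    rw [le_div_iff₀ hcs0]
    linarith
  linarith

lemma exp_39 : (14.2 : ℝ) < Real.exp 3.9 := by
  have h1 : Real.exp 3 < Real.exp 3.9 := Real.exp_lt_exp.mpr (by norm_num)
  have h2 : Real.exp 3 = Real.exp 1 ^ 3 := by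
    rw [← Real.exp_nat_mul]; norm_num
  have h3 : (2.7182818283 : ℝ) < Real.exp 1 := Real.exp_one_gt_d9
  have h4 : (2.7182818283 : ℝ) ^ 3 < Real.exp 1 ^ 3 :=
    pow_lt_pow_left₀ h3 (by norm_num) (by norm_num)
  nlinarith

lemma tanh_39 : (0.99 : ℝ) < Real.tanh 3.9 := by
  rw [Real.tanh_eq_sinh_div_cosh, Real.sinh_eq, Real.cosh_eq, Real.exp_neg]
  have ht : (14.2 : ℝ) < Real.exp 3.9 := exp_39
  have ht0 : 0 < Real.exp 3.9 := Real.exp_pos _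
  have hinv : (Real.exp 3.9)⁻¹ * Real.exp 3.9 = 1 := inv_mul_cancel₀ (ne_of_gt ht0)
  have hinvpos : 0 < (Real.exp 3.9)⁻¹ := by positivity
  have hinvlt : (Real.exp 3.9)⁻¹ < 0.0705 := by nlinarith
  rw [lt_div_iff₀ (by positivity)]
  linarith

lemma tan_39 : Real.tan 3.9 < Real.tanh 3.9 := by
  obtain ⟨x, hxdef⟩ : ∃ x : ℝ, x = 3.9 - π := ⟨_, rfl⟩
  have hper : Real.tan (x + π) = Real.tan x := Real.tan_periodic _
  have h39 : Real.tan 3.9 = Real.tan x := by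
    rw [← hper, hxdef]; norm_num
  have hpi1 : 3.141592 < π := by linarith [Real.pi_gt_d6]
  have hpi2 : π < 3.141593 := by linarith [Real.pi_lt_d6]
  have hx0 : 0 < x := by rw [hxdef]; linarith
  have hx1 : x ≤ 0.75841 := by rw [hxdef]; linarith
  have habs : |x| ≤ 1 := by rw [abs_of_pos hx0]; linarith
  have hs := Real.sin_bound habs
  have hsin : Real.sin x ≤ x - x ^ 3 / 6 + |x| ^ 4 * (5 / 96) := by
    have := abs_le.mp hs
    have h54 : |x| ^ 5 ≤ |x| ^ 4 := pow_le_pow_of_le_one (abs_nonneg x) habs (by norm_num)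
    linarith [this.2, pow_nonneg (abs_nonneg x) 4]
  rw [abs_of_pos hx0] at hsin
  have hcos : 1 - x ^ 2 / 2 ≤ Real.cos x := Real.one_sub_sq_div_two_le_cos
  have hcpos : 0 < Real.cos x := by nlinarith
  have htan : Real.tan x < 0.99 := by
    rw [Real.tan_eq_sin_div_cos, div_lt_iff₀ hcpos]
    have hc : (0:ℝ) ≤ 0.75841 - x := by linarith
    nlinarith [mul_nonneg hc hx0.le, mul_nonneg (mul_nonneg hc hx0.le) hx0.le,
      mul_nonneg (mul_nonneg (mul_nonneg hc hx0.le) hx0.le) hx0.le,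
      mul_nonneg (mul_nonneg hc hc) hx0.le, hc, sq_nonneg x]
  rw [h39]
  calc Real.tan x < 0.99 := htan
    _ < Real.tanh 3.9 := tanh_39

lemma tan_395 : Real.tanh 3.95 < Real.tan 3.95 := by
  have hper : Real.tan (3.95 - π + π) = Real.tan (3.95 - π) := Real.tan_periodic _
  have h395 : Real.tan 3.95 = Real.tan (3.95 - π) := by
    rw [← hper]; norm_num
  have hpi1 : 3.141592 < π := by linarith [Real.pi_gt_d6]
  have hpi2 : π < 3.141593 := by linarith [Real.pi_lt_d6]
  have hmem1 : π / 4 ∈ Ioo (-(π / 2)) (π / 2) := by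
    constructor <;> linarith
  have hmem2 : 3.95 - π ∈ Ioo (-(π / 2)) (π / 2) := by
    constructor <;> linarith
  have hlt : π / 4 < 3.95 - π := by linarith
  have := Real.strictMonoOn_tan hmem1 hmem2 hlt
  rw [Real.tan_pi_div_four] at this
  calc Real.tanh 3.95 < 1 := tanh_lt_one _
    _ < Real.tan (3.95 - π) := this
    _ = Real.tan 3.95 := h395.symm

lemma subset_Ioo : Ioo (3.9 : ℝ) 3.95 ⊆ Ioo π (3 * π / 2) := by
  intro x hx
  have hpi1 : 3.141592 < π := by linarith [Real.pi_gt_d6]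
  have hpi2 : π < 3.141593 := by linarith [Real.pi_lt_d6]
  exact ⟨by linarith [hx.1], by linarith [hx.2]⟩

end Stmt9Aux

/-- The equation `tan λ = tanh λ` has exactly one solution in `(π, 3π/2)`, and this
solution lies in `(3.9, 3.95)`. -/
theorem stmt9 : ∃ l ∈ Ioo Real.pi (3 * Real.pi / 2),
    Real.tan l = Real.tanh l ∧
    (∀ y ∈ Ioo Real.pi (3 * Real.pi / 2), Real.tan y = Real.tanh y → y = l) ∧
    l ∈ Ioo (3.9 : ℝ) 3.95 := by
  set f : ℝ → ℝ := fun x => Real.tan x - Real.tanh x with hf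
  have hpi1 : 3.141592 < Real.pi := by linarith [Real.pi_gt_d6]
  have hpi2 : Real.pi < 3.141593 := by linarith [Real.pi_lt_d6]
  have hsub : Icc (3.9 : ℝ) 3.95 ⊆ Ioo Real.pi (3 * Real.pi / 2) := by
    intro x hx
    exact ⟨by linarith [hx.1], by linarith [hx.2]⟩
  have hcontOn : ContinuousOn f (Icc (3.9 : ℝ) 3.95) :=
    Stmt9Aux.continuousOn_f.mono hsub
  have hivt := intermediate_value_Ioo (by norm_num : (3.9:ℝ) ≤ 3.95) hcontOn
  have h0mem : (0 : ℝ) ∈ Ioo (f 3.9) (f 3.95) := by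
    constructor
    · simp only [hf, sub_neg]
      exact Stmt9Aux.tan_39
    · simp only [hf, sub_pos]
      exact Stmt9Aux.tan_395
  obtain ⟨l, hl, hfl⟩ := hivt h0mem
  have hlmem : l ∈ Ioo Real.pi (3 * Real.pi / 2) := Stmt9Aux.subset_Ioo hl
  refine ⟨l, hlmem, ?_, ?_, hl⟩
  · have : Real.tan l - Real.tanh l = 0 := hfl
    linarith
  · intro y hy hty
    have hfy : f y = 0 := by simp [hf, hty]
    have heq : f y = f l := by rw [hfy, hfl]
    exact Stmt9Aux.strictMonoOn_f.injOn hy hlmem heq
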